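/- arXiv:1803.01019 — 2 statements merged into one kernel-verified Lean document; each statement's English description precedes it below -/
import Mathlib

section
/- Let w, e : [-π,π] → ℝ be continuously differentiable 2π-periodic functions with ||w||_{W^{1,∞}} ≤ M and |e(x)| ≤ 1 for all x, and q ≥ 1 an integer. Then |∫_{-π}^{π} R(w,-e)(x) e(x) dx| ≤ C(q, M) ∫_{-π}^{π} e(x)² dx, where R(v,u) = (1/(q+1)) ∂_x( Σ_{j=1}^{q} binom(q+1,j) v^{q+1-j} u^j ) and C(q,M) depends only on q and M. -/
open Real intervalIntegral

private lemma integral_deriv_periodic_zero (f : ℝ → ℝ) (hf : ContDiff ℝ 1 f)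
    (hp : Function.Periodic f (2 * π)) : ∫ x in (-π : ℝ)..π, deriv f x = 0 := by
  rw [intervalIntegral.integral_deriv_eq_sub
    (fun x _ => (hf.differentiable one_ne_zero) x)
    ((hf.continuous_deriv le_rfl).intervalIntegrable _ _)]
  have h := hp (-π)
  have h2 : -π + 2 * π = π := by ring
  rw [h2] at h
  rw [h, sub_self]

private lemma key_term (q j : ℕ) (hj1 : 1 ≤ j) (hjq : j ≤ q) (M : ℝ) (hM : 0 ≤ M)
    (w e : ℝ → ℝ) (hw : ContDiff ℝ 1 w) (he : ContDiff ℝ 1 e)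
    (hpw : Function.Periodic w (2 * π)) (hpe : Function.Periodic e (2 * π))
    (hwM : ∀ x, |w x| ≤ M) (hw'M : ∀ x, |deriv w x| ≤ M) (he1 : ∀ x, |e x| ≤ 1) :
    |∫ x in (-π : ℝ)..π, deriv (fun y => (w y) ^ (q + 1 - j) * (-(e y)) ^ j) x * e x|
      ≤ ((q : ℝ) + 1) * (max 1 M) ^ (q + 1) * ∫ x in (-π : ℝ)..π, (e x) ^ 2 := by
  have hwd : Differentiable ℝ w := hw.differentiable one_ne_zero
  have hed : Differentiable ℝ e := he.differentiable one_ne_zero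
  have hwc : Continuous w := hw.continuous
  have hec : Continuous e := he.continuous
  have hw'c : Continuous (deriv w) := hw.continuous_deriv le_rfl
  set n : ℕ := q + 1 - j with hn
  have hn1 : 1 ≤ n := by omega
  have hnq : n ≤ q + 1 := by omega
  have hjne : ((j : ℝ) + 1) ≠ 0 := by positivity
  set g : ℝ → ℝ := fun y => (w y) ^ n * (-(e y)) ^ j with hg
  set φ : ℝ → ℝ := fun x => (w x) ^ (n - 1) * deriv w x * (-(e x)) ^ (j + 1) with hφ
  set D : ℝ → ℝ := fun y => (w y) ^ n * (-(e y)) ^ j * e y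
      + (1 / ((j : ℝ) + 1)) * ((w y) ^ n * (-(e y)) ^ (j + 1)) with hD
  -- derivative facts
  have hgx : ∀ x, HasDerivAt g
      (((n : ℝ) * (w x) ^ (n - 1) * deriv w x) * (-(e x)) ^ j
        + (w x) ^ n * ((j : ℝ) * (-(e x)) ^ (j - 1) * (-(deriv e x)))) x := by
    intro x
    exact (((hwd x).hasDerivAt).pow n).mul (((hed x).hasDerivAt).neg.pow j)
  have hDx : ∀ x, HasDerivAt D
      ((((n : ℝ) * (w x) ^ (n - 1) * deriv w x) * (-(e x)) ^ j
          + (w x) ^ n * ((j : ℝ) * (-(e x)) ^ (j - 1) * (-(deriv e x)))) * e x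
        + g x * deriv e x
        + (1 / ((j : ℝ) + 1)) * (((n : ℝ) * (w x) ^ (n - 1) * deriv w x) * (-(e x)) ^ (j + 1)
            + (w x) ^ n * (((j : ℝ) + 1) * (-(e x)) ^ (j + 1 - 1) * (-(deriv e x))))) x := by
    intro x
    have h1 := ((hgx x).fun_mul ((hed x).hasDerivAt))
    have h2 := ((((hwd x).hasDerivAt).fun_pow n).fun_mul
      (((hed x).hasDerivAt).fun_neg.fun_pow (j + 1))).const_mul (1 / ((j : ℝ) + 1))
    have := h1.fun_add h2
    refine this.congr_deriv ?_
    push_cast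
    ring
  have heq : ∀ x, deriv g x * e x = deriv D x
      - ((n : ℝ) / ((j : ℝ) + 1)) * φ x := by
    intro x
    rw [(hgx x).deriv, (hDx x).deriv]
    simp only [hφ, hg, Nat.add_sub_cancel]
    field_simp
    ring
  -- ContDiff / periodic of D
  have hDcd : ContDiff ℝ 1 D := by
    apply ContDiff.add
    · exact ((hw.pow n).mul (he.neg.pow j)).mul he
    · exact contDiff_const.mul ((hw.pow n).mul (he.neg.pow (j + 1)))
  have hpD : Function.Periodic D (2 * π) := by
    intro x
    simp only [hD, hpw x, hpe x]
  have hzero : ∫ x in (-π : ℝ)..π, deriv D x = 0 :=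
    integral_deriv_periodic_zero D hDcd hpD
  have hφc : Continuous φ := ((hwc.pow _).mul hw'c).mul ((hec.neg).pow _)
  have hD'int : IntervalIntegrable (deriv D) MeasureTheory.volume (-π) π :=
    (hDcd.continuous_deriv le_rfl).intervalIntegrable _ _
  have hInt : (∫ x in (-π : ℝ)..π, deriv g x * e x)
      = -(((n : ℝ) / ((j : ℝ) + 1)) * ∫ x in (-π : ℝ)..π, φ x) := by
    rw [intervalIntegral.integral_congr (fun x _ => heq x)]
    rw [intervalIntegral.integral_sub hD'int
      ((continuous_const.fun_mul hφc).intervalIntegrable _ _)]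
    rw [intervalIntegral.integral_const_mul, hzero, zero_sub]
  -- bounds
  have hab : (-π : ℝ) ≤ π := by linarith [pi_pos]
  set K : ℝ := (max 1 M) ^ (q + 1) with hK
  have hK1 : (1 : ℝ) ≤ max 1 M := le_max_left _ _
  have hK0 : (0 : ℝ) ≤ K := by positivity
  have hφb : ∀ x, |φ x| ≤ K * (e x) ^ 2 := by
    intro x
    have h1 : |φ x| = |w x| ^ (n - 1) * |deriv w x| * |e x| ^ (j + 1) := by
      simp only [hφ, abs_mul, abs_pow, abs_neg]
    rw [h1]
    have hb1 : |w x| ^ (n - 1) * |deriv w x| ≤ K := by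
      calc |w x| ^ (n - 1) * |deriv w x| ≤ (max 1 M) ^ (n - 1) * max 1 M := by
            apply mul_le_mul _ ((hw'M x).trans (le_max_right 1 M)) (abs_nonneg _) (by positivity)
            exact pow_le_pow_left₀ (abs_nonneg _) ((hwM x).trans (le_max_right 1 M)) _
        _ = (max 1 M) ^ (n - 1 + 1) := by rw [pow_succ]
        _ ≤ K := pow_le_pow_right₀ hK1 (by omega)
    have hb2 : |e x| ^ (j + 1) ≤ (e x) ^ 2 := by
      calc |e x| ^ (j + 1) ≤ |e x| ^ 2 :=
            pow_le_pow_of_le_one (abs_nonneg _) (he1 x) (by omega)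
        _ = (e x) ^ 2 := sq_abs _
    exact mul_le_mul hb1 hb2 (by positivity) hK0
  have he2nn : 0 ≤ ∫ x in (-π : ℝ)..π, (e x) ^ 2 :=
    intervalIntegral.integral_nonneg hab (fun x _ => sq_nonneg _)
  have hφint : |∫ x in (-π : ℝ)..π, φ x| ≤ K * ∫ x in (-π : ℝ)..π, (e x) ^ 2 := by
    calc |∫ x in (-π : ℝ)..π, φ x| ≤ ∫ x in (-π : ℝ)..π, |φ x| :=
          intervalIntegral.abs_integral_le_integral_abs hab
      _ ≤ ∫ x in (-π : ℝ)..π, K * (e x) ^ 2 := by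
          apply intervalIntegral.integral_mono_on hab
            (hφc.abs.intervalIntegrable _ _)
            ((continuous_const.mul (hec.pow 2)).intervalIntegrable _ _)
            (fun x _ => hφb x)
      _ = K * ∫ x in (-π : ℝ)..π, (e x) ^ 2 := intervalIntegral.integral_const_mul _ _
  have hratio : (n : ℝ) / ((j : ℝ) + 1) ≤ (q : ℝ) + 1 := by
    rw [div_le_iff₀ (by positivity)]
    have : (n : ℝ) ≤ (q : ℝ) + 1 := by exact_mod_cast hnq
    nlinarith [Nat.cast_nonneg (α := ℝ) j, Nat.cast_nonneg (α := ℝ) q]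
  calc |∫ x in (-π : ℝ)..π, deriv g x * e x|
      = ((n : ℝ) / ((j : ℝ) + 1)) * |∫ x in (-π : ℝ)..π, φ x| := by
        rw [hInt, abs_neg, abs_mul, abs_of_nonneg (by positivity)]
    _ ≤ ((q : ℝ) + 1) * (K * ∫ x in (-π : ℝ)..π, (e x) ^ 2) := by
        apply mul_le_mul hratio hφint (abs_nonneg _) (by positivity)
    _ = ((q : ℝ) + 1) * K * ∫ x in (-π : ℝ)..π, (e x) ^ 2 := by ring

theorem benjamin_remainder_estimate (q : ℕ) (hq : 1 ≤ q) (M : ℝ) (hM : 0 ≤ M) :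
    ∃ C > 0, ∀ w e : ℝ → ℝ,
      ContDiff ℝ 1 w → ContDiff ℝ 1 e →
      Function.Periodic w (2 * π) → Function.Periodic e (2 * π) →
      (∀ x, |w x| ≤ M) → (∀ x, |deriv w x| ≤ M) → (∀ x, |e x| ≤ 1) →
      |∫ x in (-π : ℝ)..π,
          ((1 / (q + 1 : ℝ)) * deriv (fun y =>
            ∑ j ∈ Finset.Icc 1 q, ((q + 1).choose j : ℝ) * (w y) ^ (q + 1 - j) * (-(e y)) ^ j) x)
            * e x|
        ≤ C * ∫ x in (-π : ℝ)..π, (e x) ^ 2 := by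
  refine ⟨2 ^ (q + 1) * (((q : ℝ) + 1) * (max 1 M) ^ (q + 1)), by positivity, ?_⟩
  intro w e hw he hpw hpe hwM hw'M he1
  have hwd : Differentiable ℝ w := hw.differentiable one_ne_zero
  have hed : Differentiable ℝ e := he.differentiable one_ne_zero
  have hec : Continuous e := he.continuous
  set K : ℝ := (max 1 M) ^ (q + 1) with hK
  have hK0 : (0 : ℝ) ≤ K := by positivity
  have hab : (-π : ℝ) ≤ π := by linarith [pi_pos]
  have he2nn : 0 ≤ ∫ x in (-π : ℝ)..π, (e x) ^ 2 :=
    intervalIntegral.integral_nonneg hab (fun x _ => sq_nonneg _)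
  -- differentiability of each term
  have hgd : ∀ (j : ℕ) (x : ℝ),
      DifferentiableAt ℝ (fun y => (w y) ^ (q + 1 - j) * (-(e y)) ^ j) x := by
    intro j x
    exact ((hwd x).pow _).mul ((hed x).neg.pow _)
  -- rewrite the derivative of the sum
  have hsum : ∀ x, deriv (fun y =>
      ∑ j ∈ Finset.Icc 1 q, ((q + 1).choose j : ℝ) * (w y) ^ (q + 1 - j) * (-(e y)) ^ j) x
      = ∑ j ∈ Finset.Icc 1 q, ((q + 1).choose j : ℝ)
          * deriv (fun y => (w y) ^ (q + 1 - j) * (-(e y)) ^ j) x := by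
    intro x
    have hfe : (fun y => ∑ j ∈ Finset.Icc 1 q,
          ((q + 1).choose j : ℝ) * (w y) ^ (q + 1 - j) * (-(e y)) ^ j)
        = fun y => ∑ j ∈ Finset.Icc 1 q,
          ((q + 1).choose j : ℝ) * ((w y) ^ (q + 1 - j) * (-(e y)) ^ j) := by
      funext y
      exact Finset.sum_congr rfl (fun j _ => by ring)
    rw [hfe, deriv_fun_sum (fun j _ => (hgd j x).const_mul _)]
    exact Finset.sum_congr rfl (fun j _ => deriv_const_mul _ (hgd j x))
  -- pointwise rewriting of the integrand
  have hpt : ∀ x, ((1 / ((q : ℝ) + 1)) * deriv (fun y =>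
      ∑ j ∈ Finset.Icc 1 q, ((q + 1).choose j : ℝ) * (w y) ^ (q + 1 - j) * (-(e y)) ^ j) x) * e x
      = ∑ j ∈ Finset.Icc 1 q, (1 / ((q : ℝ) + 1)) * ((q + 1).choose j : ℝ)
          * (deriv (fun y => (w y) ^ (q + 1 - j) * (-(e y)) ^ j) x * e x) := by
    intro x
    rw [hsum x, Finset.mul_sum, Finset.sum_mul]
    exact Finset.sum_congr rfl (fun j _ => by ring)
  have hcont : ∀ j : ℕ, Continuous
      (fun x => deriv (fun y => (w y) ^ (q + 1 - j) * (-(e y)) ^ j) x * e x) := by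
    intro j
    have : ContDiff ℝ 1 (fun y => (w y) ^ (q + 1 - j) * (-(e y)) ^ j) :=
      (hw.pow _).mul (he.neg.pow _)
    exact (this.continuous_deriv le_rfl).mul hec
  have hintg : ∫ x in (-π : ℝ)..π, ((1 / ((q : ℝ) + 1)) * deriv (fun y =>
      ∑ j ∈ Finset.Icc 1 q, ((q + 1).choose j : ℝ) * (w y) ^ (q + 1 - j) * (-(e y)) ^ j) x) * e x
      = ∑ j ∈ Finset.Icc 1 q, (1 / ((q : ℝ) + 1)) * ((q + 1).choose j : ℝ)
          * ∫ x in (-π : ℝ)..π,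
              deriv (fun y => (w y) ^ (q + 1 - j) * (-(e y)) ^ j) x * e x := by
    rw [intervalIntegral.integral_congr (fun x _ => hpt x)]
    rw [intervalIntegral.integral_finset_sum (fun j _ =>
      ((continuous_const.fun_mul (hcont j)).intervalIntegrable _ _))]
    exact Finset.sum_congr rfl (fun j _ => intervalIntegral.integral_const_mul _ _)
  rw [hintg]
  -- bound the sum
  have hterm : ∀ j ∈ Finset.Icc 1 q,
      |(1 / ((q : ℝ) + 1)) * ((q + 1).choose j : ℝ)
          * ∫ x in (-π : ℝ)..π,
              deriv (fun y => (w y) ^ (q + 1 - j) * (-(e y)) ^ j) x * e x|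
      ≤ ((q + 1).choose j : ℝ) * (K * ∫ x in (-π : ℝ)..π, (e x) ^ 2) := by
    intro j hj
    rw [Finset.mem_Icc] at hj
    have hkey := key_term q j hj.1 hj.2 M hM w e hw he hpw hpe hwM hw'M he1
    rw [abs_mul, abs_mul]
    have h1 : |(1 / ((q : ℝ) + 1))| = 1 / ((q : ℝ) + 1) := abs_of_nonneg (by positivity)
    have h2 : |((q + 1).choose j : ℝ)| = ((q + 1).choose j : ℝ) :=
      abs_of_nonneg (by positivity)
    rw [h1, h2]
    calc (1 / ((q : ℝ) + 1)) * ((q + 1).choose j : ℝ) * |∫ x in (-π : ℝ)..π,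
            deriv (fun y => (w y) ^ (q + 1 - j) * (-(e y)) ^ j) x * e x|
        ≤ (1 / ((q : ℝ) + 1)) * ((q + 1).choose j : ℝ)
            * (((q : ℝ) + 1) * K * ∫ x in (-π : ℝ)..π, (e x) ^ 2) := by
          apply mul_le_mul_of_nonneg_left hkey (by positivity)
      _ = ((q + 1).choose j : ℝ) * (K * ∫ x in (-π : ℝ)..π, (e x) ^ 2) := by
          field_simp
  have hbin : (∑ j ∈ Finset.Icc 1 q, ((q + 1).choose j : ℝ)) ≤ 2 ^ (q + 1) := by
    have hnat : (∑ j ∈ Finset.Icc 1 q, (q + 1).choose j) ≤ 2 ^ (q + 1) := by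
      calc (∑ j ∈ Finset.Icc 1 q, (q + 1).choose j)
          ≤ ∑ j ∈ Finset.range (q + 2), (q + 1).choose j := by
            apply Finset.sum_le_sum_of_subset
            intro j hj
            rw [Finset.mem_Icc] at hj
            rw [Finset.mem_range]
            omega
        _ = 2 ^ (q + 1) := Nat.sum_range_choose (q + 1)
    calc (∑ j ∈ Finset.Icc 1 q, ((q + 1).choose j : ℝ))
        = ((∑ j ∈ Finset.Icc 1 q, (q + 1).choose j : ℕ) : ℝ) := by push_cast; ring
      _ ≤ ((2 ^ (q + 1) : ℕ) : ℝ) := by exact_mod_cast hnat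
      _ = 2 ^ (q + 1) := by push_cast; ring
  calc |∑ j ∈ Finset.Icc 1 q, (1 / ((q : ℝ) + 1)) * ((q + 1).choose j : ℝ)
          * ∫ x in (-π : ℝ)..π,
              deriv (fun y => (w y) ^ (q + 1 - j) * (-(e y)) ^ j) x * e x|
      ≤ ∑ j ∈ Finset.Icc 1 q, |(1 / ((q : ℝ) + 1)) * ((q + 1).choose j : ℝ)
          * ∫ x in (-π : ℝ)..π,
              deriv (fun y => (w y) ^ (q + 1 - j) * (-(e y)) ^ j) x * e x| :=
        Finset.abs_sum_le_sum_abs _ _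
    _ ≤ ∑ j ∈ Finset.Icc 1 q, ((q + 1).choose j : ℝ)
          * (K * ∫ x in (-π : ℝ)..π, (e x) ^ 2) := Finset.sum_le_sum hterm
    _ = (∑ j ∈ Finset.Icc 1 q, ((q + 1).choose j : ℝ))
          * (K * ∫ x in (-π : ℝ)..π, (e x) ^ 2) := by rw [Finset.sum_mul]
    _ ≤ 2 ^ (q + 1) * (K * ∫ x in (-π : ℝ)..π, (e x) ^ 2) :=
        mul_le_mul_of_nonneg_right hbin (by positivity)
    _ ≤ 2 ^ (q + 1) * (((q : ℝ) + 1) * K) * ∫ x in (-π : ℝ)..π, (e x) ^ 2 := by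
        have h1 : K * ∫ x in (-π : ℝ)..π, (e x) ^ 2
            ≤ ((q : ℝ) + 1) * K * ∫ x in (-π : ℝ)..π, (e x) ^ 2 := by
          apply mul_le_mul_of_nonneg_right _ he2nn
          nlinarith [Nat.cast_nonneg (α := ℝ) q]
        calc 2 ^ (q + 1) * (K * ∫ x in (-π : ℝ)..π, (e x) ^ 2)
            ≤ 2 ^ (q + 1) * (((q : ℝ) + 1) * K * ∫ x in (-π : ℝ)..π, (e x) ^ 2) :=
              mul_le_mul_of_nonneg_left h1 (by positivity)
          _ = 2 ^ (q + 1) * (((q : ℝ) + 1) * K) * ∫ x in (-π : ℝ)..π, (e x) ^ 2 := by ring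
    _ = 2 ^ (q + 1) * (((q : ℝ) + 1) * (max 1 M) ^ (q + 1)) * ∫ x in (-π : ℝ)..π, (e x) ^ 2 := by
        rw [hK]
end

section
/- Let u^N : [0,∞) → S_N satisfy the semidiscrete scheme (∂_t u^N, χ) + (-L ∂_x u^N + ∂_x f(u^N), χ) = 0 for all χ ∈ S_N. Then d/dt E_π(u^N(·,t)) = 0, where E_π(v) = ∫_{-π}^{π} ( v·Lv - 2 v^{q+2}/((q+1)(q+2)) ) dx. -/
open Real MeasureTheory Complex

noncomputable abbrev EE (k : ℤ) (x : ℝ) : ℂ := Complex.exp (Complex.I * k * x)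

lemma EE_hasDerivAt (k : ℤ) (x : ℝ) :
    HasDerivAt (fun y : ℝ => EE k y) (Complex.I * k * EE k x) x := by
  have h : HasDerivAt (fun z : ℂ => Complex.exp (Complex.I * k * z))
      (Complex.I * k * EE k x) (x : ℂ) := by
    simpa [EE, mul_comm] using
      (((hasDerivAt_id (x : ℂ)).const_mul (Complex.I * k)).cexp)
  simpa using h.comp_ofReal

lemma EE_cont (k : ℤ) : Continuous (fun x : ℝ => EE k x) :=
  Complex.continuous_exp.comp (by fun_prop)

lemma EE_mul (j k : ℤ) (x : ℝ) : EE j x * EE k x = EE (j + k) x := by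
  rw [EE, EE, EE, ← Complex.exp_add]
  push_cast
  ring_nf

lemma EE_zero (x : ℝ) : EE 0 x = 1 := by simp [EE]

lemma EE_periodic (k : ℤ) : EE k π = EE k (-π) := by
  rw [EE, EE, Complex.exp_eq_exp_iff_exists_int]
  exact ⟨k, by push_cast; ring⟩

lemma integral_EE (n : ℤ) :
    (∫ x in (-π : ℝ)..π, EE n x) = if n = 0 then (2 * π : ℂ) else 0 := by
  split_ifs with h
  · subst h
    simp only [EE_zero]
    simp [two_mul, Complex.ofReal_ofNat]
  · have hn : (Complex.I * n) ≠ 0 := by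
      simp [Complex.I_ne_zero, Int.cast_injective.ne_iff]
      exact_mod_cast h
    have := integral_exp_mul_complex (a := (-π : ℝ)) (b := π) hn
    rw [show (fun x : ℝ => EE n x) = fun x : ℝ => Complex.exp ((Complex.I * n) * x) from rfl, this]
    rw [div_eq_zero_iff]
    left
    rw [sub_eq_zero, Complex.exp_eq_exp_iff_exists_int]
    exact ⟨n, by push_cast; ring⟩


lemma half_pairing (h : ℝ → ℂ) (hc : Continuous h) (B : Finset ℤ) (b : ℤ → ℂ) :
    (∫ x in (-π : ℝ)..π, h x * (∑ k ∈ B, b k * EE k x))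
      = ∑ k ∈ B, b k * ∫ x in (-π : ℝ)..π, h x * EE k x := by
  rw [show (fun x => h x * (∑ k ∈ B, b k * EE k x))
      = fun x => ∑ k ∈ B, b k * (h x * EE k x) by
    funext x; rw [Finset.mul_sum]; exact Finset.sum_congr rfl fun k _ => by ring]
  rw [intervalIntegral.integral_finset_sum]
  · exact Finset.sum_congr rfl fun k _ => by
      rw [intervalIntegral.integral_const_mul]
  · intro k _
    exact (Continuous.intervalIntegrable (by
      exact (continuous_const.mul (hc.mul (EE_cont k)))) _ _)

lemma pairing (A B : Finset ℤ) (a b : ℤ → ℂ) :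
    (∫ x in (-π : ℝ)..π, (∑ j ∈ A, a j * EE j x) * (∑ k ∈ B, b k * EE k x))
      = ∑ j ∈ A, ∑ k ∈ B, a j * b k * (if j + k = 0 then (2 * π : ℂ) else 0) := by
  rw [half_pairing (fun x => ∑ j ∈ A, a j * EE j x) (continuous_finset_sum _ fun j _ => continuous_const.mul (EE_cont j)) B b]
  rw [Finset.sum_comm]
  refine Finset.sum_congr rfl fun j _ => ?_
  rw [show (fun x => (∑ i ∈ A, a i * EE i x) * EE j x)
      = fun x => ∑ i ∈ A, a i * EE (i + j) x from funext fun x => by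
    rw [Finset.sum_mul]; exact Finset.sum_congr rfl fun i _ => by
      rw [mul_assoc, EE_mul]]
  rw [intervalIntegral.integral_finset_sum (f := fun i x => a i * EE (i + j) x)
      (fun i _ => (continuous_const.mul (EE_cont (i + j))).intervalIntegrable (-π) π),
    Finset.mul_sum]
  refine Finset.sum_congr rfl fun i _ => ?_
  rw [intervalIntegral.integral_const_mul, integral_EE]
  ring

lemma pow_expand (v : ℤ → ℂ) (F : Finset ℤ) (n : ℕ) (x : ℝ) :
    (∑ k ∈ F, v k * EE k x) ^ n
      = ∑ p ∈ Fintype.piFinset (fun _ : Fin n => F),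
          (∏ i, v (p i)) * EE (∑ i, p i) x := by
  rw [← Fin.prod_const n (∑ k ∈ F, v k * EE k x), Finset.prod_univ_sum]
  ·
    refine Finset.sum_congr rfl fun p _ => ?_
    rw [Finset.prod_mul_distrib]
    congr 1
    rw [EE, ← Complex.exp_sum]
    congr 1
    push_cast
    rw [Finset.mul_sum, Finset.sum_mul]

lemma erase_zero_eq_Ioi (n : ℕ) :
    (Finset.univ : Finset (Fin (n+1))).erase 0 = Finset.Ioi 0 := by
  ext i
  simp [Finset.mem_erase, Finset.mem_Ioi, Fin.pos_iff_ne_zero]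

lemma cons_reindex {M : Type*} [AddCommMonoid M] (n : ℕ) (F : Finset ℤ)
    (f : (Fin (n+1) → ℤ) → M) :
    ∑ p ∈ Fintype.piFinset (fun _ : Fin (n+1) => F), f p
      = ∑ k ∈ F, ∑ p' ∈ Fintype.piFinset (fun _ : Fin n => F), f (Fin.cons k p') := by
  rw [← Finset.sum_product']
  refine Finset.sum_nbij' (fun p => (p 0, Fin.tail p)) (fun z => Fin.cons z.1 z.2) ?_ ?_ ?_ ?_ ?_
  · intro p hp
    simp only [Fintype.mem_piFinset] at hp
    simp [Finset.mem_product, Fintype.mem_piFinset, hp, Fin.tail, hp]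
  · intro z hz
    simp only [Finset.mem_product, Fintype.mem_piFinset] at hz
    simp only [Fintype.mem_piFinset]
    intro i
    refine Fin.cases ?_ ?_ i
    · simpa using hz.1
    · intro j; simpa using hz.2 j
  · intro p _; exact Fin.cons_self_tail p
  · intro z _; simp [Fin.tail]
  · intro p _; rw [Fin.cons_self_tail]

-- symmetrization: sum over permuted-coordinate is invariant
lemma swap_reindex {M : Type*} [AddCommMonoid M] (n : ℕ) (F : Finset ℤ)
    (σ : Equiv.Perm (Fin n)) (f : (Fin n → ℤ) → M) :
    ∑ p ∈ Fintype.piFinset (fun _ : Fin n => F), f (p ∘ σ)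
      = ∑ p ∈ Fintype.piFinset (fun _ : Fin n => F), f p := by
  refine Finset.sum_nbij' (fun p => p ∘ σ) (fun p => p ∘ σ.symm) ?_ ?_ ?_ ?_ ?_
  · intro p hp; simp only [Fintype.mem_piFinset] at hp ⊢; intro i; exact hp _
  · intro p hp; simp only [Fintype.mem_piFinset] at hp ⊢; intro i; exact hp _
  · intro p _; funext i; simp
  · intro p _; funext i; simp
  · intro p _; rfl

lemma odd_sum_zero (N : ℕ) (a : ℤ → ℂ) (ha : ∀ k, a (-k) = -a k) :
    ∑ k ∈ Finset.Icc (-(N:ℤ)) N, a k = 0 := by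
  have h : ∑ k ∈ Finset.Icc (-(N:ℤ)) N, a k
      = ∑ k ∈ Finset.Icc (-(N:ℤ)) N, a (-k) := by
    refine Finset.sum_nbij' (fun k => -k) (fun k => -k) ?_ ?_ ?_ ?_ ?_ <;>
      intro k hk <;> simp_all [Finset.mem_Icc] <;> omega
  have h2 : ∑ k ∈ Finset.Icc (-(N:ℤ)) N, a (-k)
      = -∑ k ∈ Finset.Icc (-(N:ℤ)) N, a k := by
    rw [← Finset.sum_neg_distrib]
    exact Finset.sum_congr rfl fun k _ => ha k
  have := h.trans h2
  linear_combination (this) / 2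

lemma symmetrize (n : ℕ) (F : Finset ℤ) (C C' : ℤ → ℂ) :
    ∑ p ∈ Fintype.piFinset (fun _ : Fin (n+1) => F),
        (if ∑ i, p i = 0 then
          ∑ j : Fin (n+1), (∏ i ∈ Finset.univ.erase j, C (p i)) * C' (p j) else 0)
      = (n+1 : ℂ) * ∑ k ∈ F, C' k *
          ∑ p' ∈ Fintype.piFinset (fun _ : Fin n => F),
            (if k + ∑ i, p' i = 0 then ∏ i, C (p' i) else 0) := by
  have hite : ∀ (p : Fin (n+1) → ℤ),
      (if ∑ i, p i = 0 then
          ∑ j : Fin (n+1), (∏ i ∈ Finset.univ.erase j, C (p i)) * C' (p j) else 0)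
        = ∑ j : Fin (n+1),
            (if ∑ i, p i = 0 then (∏ i ∈ Finset.univ.erase j, C (p i)) * C' (p j) else 0) := by
    intro p; split_ifs <;> simp
  simp_rw [hite]
  rw [Finset.sum_comm]
  have hSj : ∀ j : Fin (n+1),
      (∑ p ∈ Fintype.piFinset (fun _ : Fin (n+1) => F),
        (if ∑ i, p i = 0 then (∏ i ∈ Finset.univ.erase j, C (p i)) * C' (p j) else 0))
      = ∑ p ∈ Fintype.piFinset (fun _ : Fin (n+1) => F),
        (if ∑ i, p i = 0 then (∏ i ∈ Finset.univ.erase 0, C (p i)) * C' (p 0) else 0) := by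
    intro j
    rw [← swap_reindex (n+1) F (Equiv.swap 0 j)
      (fun p => if ∑ i, p i = 0 then (∏ i ∈ Finset.univ.erase 0, C (p i)) * C' (p 0) else 0)]
    refine Finset.sum_congr rfl fun p _ => ?_
    have hsum : ∑ i, p (Equiv.swap 0 j i) = ∑ i, p i := Equiv.sum_comp _ _
    have h0 : p (Equiv.swap 0 j 0) = p j := by rw [Equiv.swap_apply_left]
    have hprod : ∏ i ∈ Finset.univ.erase 0, C (p (Equiv.swap 0 j i))
        = ∏ i ∈ Finset.univ.erase j, C (p i) := by
      refine Finset.prod_nbij' (fun i => Equiv.swap 0 j i) (fun i => Equiv.swap 0 j i)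
        ?_ ?_ ?_ ?_ ?_
      · intro i hi
        simp only [Finset.mem_erase, Finset.mem_univ, and_true] at hi ⊢
        intro h
        apply hi
        have := (Equiv.swap 0 j).injective (a₁ := i) (a₂ := (0 : Fin (n+1)))
        exact this (by rw [h, Equiv.swap_apply_left])
      · intro i hi
        simp only [Finset.mem_erase, Finset.mem_univ, and_true] at hi ⊢
        intro h
        apply hi
        have := (Equiv.swap 0 j).injective (a₁ := i) (a₂ := (j : Fin (n+1)))
        rw [h] at this
        exact this (by rw [Equiv.swap_apply_right])
      · intro i _; simp [Equiv.swap_apply_self]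
      · intro i _; simp [Equiv.swap_apply_self]
      · intro i _; rfl
    simp only [Function.comp, hsum, h0, hprod]
  simp_rw [hSj]
  rw [Finset.sum_const, Finset.card_univ, Fintype.card_fin, nsmul_eq_mul]
  push_cast
  congr 1
  rw [cons_reindex n F
    (fun p => if ∑ i, p i = 0 then (∏ i ∈ Finset.univ.erase 0, C (p i)) * C' (p 0) else 0)]
  refine Finset.sum_congr rfl fun k _ => ?_
  rw [Finset.mul_sum]
  refine Finset.sum_congr rfl fun p' _ => ?_
  rw [Fin.sum_cons, Fin.cons_zero, erase_zero_eq_Ioi, Fin.prod_Ioi_zero]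
  simp only [Fin.cons_succ]
  split_ifs <;> ring


lemma byparts (h h' : ℝ → ℂ) (hd : ∀ x, HasDerivAt h (h' x) x) (hc : Continuous h')
    (hper : h π = h (-π)) (k : ℤ) :
    (∫ x in (-π : ℝ)..π, h' x * EE k x)
      = -(Complex.I * k) * ∫ x in (-π : ℝ)..π, h x * EE k x := by
  have hhc : Continuous h := by
    have : Differentiable ℝ h := fun x => (hd x).differentiableAt
    exact this.continuous
  have hφ : ∀ x, HasDerivAt (fun y => h y * EE k y)
      (h' x * EE k x + h x * (Complex.I * k * EE k x)) x :=
    fun x => (hd x).mul (EE_hasDerivAt k x)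
  have hint : (∫ x in (-π : ℝ)..π, (h' x * EE k x + h x * (Complex.I * k * EE k x)))
      = h π * EE k π - h (-π) * EE k (-π) := by
    exact intervalIntegral.integral_eq_sub_of_hasDerivAt (fun x _ => hφ x)
      (((hc.mul (EE_cont k)).add (hhc.mul (continuous_const.mul (EE_cont k)))).intervalIntegrable
        (-π) π)
  rw [hper, EE_periodic, sub_self] at hint
  rw [intervalIntegral.integral_add (f := fun x => h' x * EE k x)
      (g := fun x => h x * (Complex.I * k * EE k x)) ((hc.mul (EE_cont k)).intervalIntegrable _ _)
      ((hhc.mul (continuous_const.mul (EE_cont k))).intervalIntegrable _ _)] at hint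
  have : (∫ x in (-π : ℝ)..π, h x * (Complex.I * k * EE k x))
      = (Complex.I * k) * ∫ x in (-π : ℝ)..π, h x * EE k x := by
    rw [← intervalIntegral.integral_const_mul]
    exact intervalIntegral.integral_congr fun x _ => by ring
  rw [this] at hint
  linear_combination hint

lemma collapse (N : ℕ) (f : ℤ → ℤ → ℂ) :
    (∑ j ∈ Finset.Icc (-(N:ℤ)) N, ∑ k ∈ Finset.Icc (-(N:ℤ)) N,
        f j k * (if j + k = 0 then (2 * π : ℂ) else 0))
      = 2 * π * ∑ j ∈ Finset.Icc (-(N:ℤ)) N, f j (-j) := by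
  rw [Finset.mul_sum]
  refine Finset.sum_congr rfl fun j hj => ?_
  have : ∀ k, f j k * (if j + k = 0 then (2 * π : ℂ) else 0)
      = if k = -j then f j k * (2 * π) else 0 := by
    intro k
    by_cases h : k = -j
    · simp [h]
    · rw [if_neg h, if_neg (by omega), mul_zero]
  simp_rw [this]
  rw [Finset.sum_ite_eq' (Finset.Icc (-(N:ℤ)) N) (-j) (fun k => f j k * (2*π))]
  rw [if_pos (by simp only [Finset.mem_Icc] at hj ⊢; omega)]
  ring

lemma pow_pair (v : ℤ → ℂ) (F : Finset ℤ) (n : ℕ) (k : ℤ) :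
    (∫ x in (-π : ℝ)..π, (∑ j ∈ F, v j * EE j x) ^ n * EE k x)
      = 2 * π * ∑ p ∈ Fintype.piFinset (fun _ : Fin n => F),
          (if k + ∑ i, p i = 0 then ∏ i, v (p i) else 0) := by
  have : (fun x => (∑ j ∈ F, v j * EE j x) ^ n * EE k x)
      = fun x => ∑ p ∈ Fintype.piFinset (fun _ : Fin n => F),
          (∏ i, v (p i)) * EE ((∑ i, p i) + k) x := by
    funext x
    rw [pow_expand, Finset.sum_mul]
    exact Finset.sum_congr rfl fun p _ => by rw [mul_assoc, EE_mul]
  rw [this, intervalIntegral.integral_finset_sum (f := fun (p : Fin n → ℤ) (x : ℝ) => (∏ i, v (p i)) * EE ((∑ i, p i) + k) x)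
    (fun p _ => (continuous_const.mul (EE_cont _)).intervalIntegrable (-π) π)]
  rw [Finset.mul_sum]
  refine Finset.sum_congr rfl fun p _ => ?_
  rw [intervalIntegral.integral_const_mul, integral_EE]
  rw [show ((∑ i, p i) + k) = (k + ∑ i, p i) from add_comm _ _]
  split_ifs <;> ring

lemma pow_integral (v : ℤ → ℂ) (F : Finset ℤ) (n : ℕ) :
    (∫ x in (-π : ℝ)..π, (∑ j ∈ F, v j * EE j x) ^ n)
      = 2 * π * ∑ p ∈ Fintype.piFinset (fun _ : Fin n => F),
          (if ∑ i, p i = 0 then ∏ i, v (p i) else 0) := by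
  have := pow_pair v F n 0
  simp only [EE_zero, mul_one, zero_add] at this
  exact this

lemma conj_sum_zero {F : Finset ℤ} {A : ℤ → ℂ}
    (h : ∑ k ∈ F, (starRingEnd ℂ (A k)) * A k = 0) : ∀ k ∈ F, A k = 0 := by
  have h2 : ∑ k ∈ F, (Complex.normSq (A k) : ℂ) = 0 := by
    rw [← h]
    exact Finset.sum_congr rfl fun k _ => by
      rw [← Complex.normSq_eq_conj_mul_self]
  have h3 : ∑ k ∈ F, Complex.normSq (A k) = 0 := by
    have := h2
    push_cast at this ⊢
    exact_mod_cast this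
  intro k hk
  have := (Finset.sum_eq_zero_iff_of_nonneg (fun i _ => Complex.normSq_nonneg (A i))).mp h3 k hk
  exact Complex.normSq_eq_zero.mp this

lemma sum_neg_Icc (N : ℕ) (f : ℤ → ℂ) :
    ∑ k ∈ Finset.Icc (-(N:ℤ)) N, f (-k) = ∑ k ∈ Finset.Icc (-(N:ℤ)) N, f k := by
  refine Finset.sum_nbij' (fun k => -k) (fun k => -k) ?_ ?_ ?_ ?_ ?_ <;>
    intro k hk <;> simp_all [Finset.mem_Icc] <;> omega

lemma EE_conj (k : ℤ) (x : ℝ) : (starRingEnd ℂ) (EE k x) = EE (-k) x := by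
  rw [EE, EE, ← Complex.exp_conj]
  congr 1
  simp only [map_mul, Complex.conj_I, Complex.conj_ofReal, map_intCast]
  push_cast
  ring

lemma conj_trig (N : ℕ) (d : ℤ → ℂ) (x : ℝ) :
    (starRingEnd ℂ) (∑ k ∈ Finset.Icc (-(N:ℤ)) N, d k * EE k x)
      = ∑ k ∈ Finset.Icc (-(N:ℤ)) N, (starRingEnd ℂ) (d (-k)) * EE k x := by
  rw [map_sum, ← sum_neg_Icc]
  exact Finset.sum_congr rfl fun k _ => by rw [map_mul, EE_conj, neg_neg]

set_option maxHeartbeats 1000000 in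
lemma stepA (N q m : ℕ) (r δ γ : ℝ) (c : ℝ → ℤ → ℂ) (t : ℝ) (ht : 0 < t)
    (hdiff : ∀ k, Differentiable ℝ (fun t => c t k))
    (hweak : ∀ d : ℤ → ℂ, (∀ k : ℤ, (N : ℤ) < |k| → d k = 0) → ∀ t > (0 : ℝ),
      (∫ x in (-π : ℝ)..π,
          (deriv (fun s => ∑ k ∈ Finset.Icc (-(N : ℤ)) N,
              c s k * Complex.exp (Complex.I * k * x)) t)
            * starRingEnd ℂ (∑ k ∈ Finset.Icc (-(N : ℤ)) N,
                d k * Complex.exp (Complex.I * k * x)))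
        + (∫ x in (-π : ℝ)..π,
            (-(∑ k ∈ Finset.Icc (-(N : ℤ)) N,
                (Complex.I * k)
                  * ((δ * |(k : ℝ)| ^ (2 * m) - γ * |(k : ℝ)| ^ (2 * r) : ℝ) : ℂ)
                  * c t k * Complex.exp (Complex.I * k * x))
              + deriv (fun y => (∑ k ∈ Finset.Icc (-(N : ℤ)) N,
                  c t k * Complex.exp (Complex.I * k * y)) ^ (q + 1) / (q + 1)) x)
              * starRingEnd ℂ (∑ k ∈ Finset.Icc (-(N : ℤ)) N,
                  d k * Complex.exp (Complex.I * k * x))) = 0) :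
    ∀ k ∈ Finset.Icc (-(N:ℤ)) N,
      deriv (fun s => c s k) t
        = Complex.I * k * (((δ * |(k : ℝ)| ^ (2 * m) - γ * |(k : ℝ)| ^ (2 * r) : ℝ) : ℂ) * c t k
            - (∑ p ∈ Fintype.piFinset (fun _ : Fin (q+1) => Finset.Icc (-(N:ℤ)) N),
                (if -k + ∑ i, p i = 0 then ∏ i, c t (p i) else 0)) / ((q:ℂ)+1)) := by
  set F := Finset.Icc (-(N:ℤ)) N with hF
  set l : ℤ → ℝ := fun k => δ * |(k:ℝ)| ^ (2*m) - γ * |(k:ℝ)| ^ (2*r) with hl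
  set cp : ℤ → ℂ := fun k => deriv (fun s => c s k) t with hcp
  set G : ℤ → ℂ := fun k => ∑ p ∈ Fintype.piFinset (fun _ : Fin (q+1) => F),
      (if k + ∑ i, p i = 0 then ∏ i, c t (p i) else 0) with hG
  set A : ℤ → ℂ := fun k =>
      cp k - Complex.I * k * ((l k : ℂ) * c t k - G (-k) / ((q:ℂ)+1)) with hA
  set d : ℤ → ℂ := fun k => if k ∈ F then A k else 0 with hd
  have hq1 : ((q:ℂ)+1) ≠ 0 := by
    have : ((q:ℕ)+1 : ℕ) ≠ 0 := Nat.succ_ne_zero q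
    exact_mod_cast this
  have hdsupp : ∀ k : ℤ, (N : ℤ) < |k| → d k = 0 := by
    intro k hk
    have hnk : k ∉ F := by rw [hF, Finset.mem_Icc]; rcases lt_abs.mp hk with h | h <;> omega
    simp only [hd, if_neg hnk]
  have hw := hweak d hdsupp t ht
  -- derivative of sum in time
  have hde : ∀ x : ℝ, deriv (fun s => ∑ k ∈ F, c s k * EE k x) t = ∑ k ∈ F, cp k * EE k x :=
    fun x => (HasDerivAt.fun_sum (fun k _ => ((hdiff k) t).hasDerivAt.mul_const (EE k x))).deriv
  -- first integral
  have h1 : (∫ x in (-π : ℝ)..π,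
        (deriv (fun s => ∑ k ∈ F, c s k * EE k x) t) * starRingEnd ℂ (∑ k ∈ F, d k * EE k x))
      = 2*π * ∑ k ∈ F, cp k * (starRingEnd ℂ) (d k) := by
    rw [show (fun x => (deriv (fun s => ∑ k ∈ F, c s k * EE k x) t)
          * starRingEnd ℂ (∑ k ∈ F, d k * EE k x))
        = fun x => (∑ k ∈ F, cp k * EE k x)
            * (∑ k ∈ F, (starRingEnd ℂ) (d (-k)) * EE k x) from
      funext fun x => by rw [hde x, hF, conj_trig]]
    rw [hF, pairing, collapse]
    simp only [neg_neg]
  -- continuity facts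
  have hUc : Continuous (fun x : ℝ => ∑ k ∈ F, c t k * EE k x) :=
    continuous_finset_sum _ fun k _ => continuous_const.mul (EE_cont k)
  have hVc : Continuous (fun x : ℝ => ∑ k ∈ F, c t k * (Complex.I * k * EE k x)) :=
    continuous_finset_sum _ fun k _ => continuous_const.mul (continuous_const.mul (EE_cont k))
  have hXc : Continuous (fun x : ℝ => ∑ k ∈ F, (starRingEnd ℂ) (d (-k)) * EE k x) :=
    continuous_finset_sum _ fun k _ => continuous_const.mul (EE_cont k)
  have hSc : Continuous (fun x : ℝ =>
      ∑ k ∈ F, (-(Complex.I * k * ((l k : ℝ) : ℂ) * c t k)) * EE k x) :=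
    continuous_finset_sum _ fun k _ => continuous_const.mul (EE_cont k)
  have hDhc : Continuous (fun x : ℝ => (∑ k ∈ F, c t k * EE k x) ^ q
      * (∑ k ∈ F, c t k * (Complex.I * k * EE k x))) := (hUc.pow q).mul hVc
  -- complex derivative of the nonlinearity
  have hCd : ∀ z : ℂ, HasDerivAt
      (fun y : ℂ => (∑ k ∈ F, c t k * Complex.exp (Complex.I * k * y)) ^ (q+1) / ((q:ℂ)+1))
      ((∑ k ∈ F, c t k * Complex.exp (Complex.I * k * z)) ^ q
        * (∑ k ∈ F, c t k * (Complex.I * k * Complex.exp (Complex.I * k * z)))) z := by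
    intro z
    have hU : HasDerivAt (fun y : ℂ => ∑ k ∈ F, c t k * Complex.exp (Complex.I * k * y))
        (∑ k ∈ F, c t k * (Complex.I * k * Complex.exp (Complex.I * k * z))) z := by
      refine HasDerivAt.fun_sum fun k _ => ?_
      have : HasDerivAt (fun y : ℂ => Complex.exp (Complex.I * k * y))
          (Complex.I * k * Complex.exp (Complex.I * k * z)) z := by
        simpa [mul_comm] using ((hasDerivAt_id z).const_mul (Complex.I * k)).cexp
      exact this.const_mul (c t k)
    have h2 := (hU.pow (q+1)).div_const ((q:ℂ)+1)
    have heq : ((↑(q+1) : ℂ) * (∑ k ∈ F, c t k * Complex.exp (Complex.I * k * z)) ^ (q + 1 - 1)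
          * (∑ k ∈ F, c t k * (Complex.I * k * Complex.exp (Complex.I * k * z)))) / ((q:ℂ)+1)
        = (∑ k ∈ F, c t k * Complex.exp (Complex.I * k * z)) ^ q
          * (∑ k ∈ F, c t k * (Complex.I * k * Complex.exp (Complex.I * k * z))) := by
      rw [Nat.add_sub_cancel]
      push_cast
      rw [mul_assoc, mul_div_cancel_left₀ _ hq1]
    rw [heq] at h2
    exact h2
  -- real HasDerivAt for the nonlinearity (as a function of the real variable)
  have hRd : ∀ x : ℝ, HasDerivAt
      (fun y : ℝ => (∑ k ∈ F, c t k * EE k y) ^ (q+1) / ((q:ℂ)+1))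
      ((∑ k ∈ F, c t k * EE k x) ^ q
        * (∑ k ∈ F, c t k * (Complex.I * k * EE k x))) x :=
    fun x => (hCd x).comp_ofReal
  have hDeq : ∀ x : ℝ,
      deriv (fun y : ℂ => (∑ k ∈ F, c t k * Complex.exp (Complex.I * k * y)) ^ (q+1)
          / ((q:ℂ)+1)) (x : ℂ)
        = (∑ k ∈ F, c t k * EE k x) ^ q
          * (∑ k ∈ F, c t k * (Complex.I * k * EE k x)) :=
    fun x => (hCd x).deriv
  -- periodicity of u(t, ·)
  have hper : (∑ k ∈ F, c t k * EE k π) ^ (q+1) / ((q:ℂ)+1)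
      = (∑ k ∈ F, c t k * EE k (-π)) ^ (q+1) / ((q:ℂ)+1) := by
    congr 2
    exact Finset.sum_congr rfl fun k _ => by rw [EE_periodic]
  -- Fourier coefficient of the x-derivative of the nonlinearity
  have hkey : ∀ k : ℤ, (∫ x in (-π : ℝ)..π,
        ((∑ j ∈ F, c t j * EE j x) ^ q * (∑ j ∈ F, c t j * (Complex.I * j * EE j x)))
          * EE k x)
      = -(Complex.I * k) * ((1/((q:ℂ)+1)) * (2 * π * G k)) := by
    intro k
    rw [byparts (fun y => (∑ j ∈ F, c t j * EE j y) ^ (q+1) / ((q:ℂ)+1)) _ hRd hDhc hper k]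
    congr 1
    rw [show (fun x : ℝ => (∑ j ∈ F, c t j * EE j x) ^ (q+1) / ((q:ℂ)+1) * EE k x)
        = fun x : ℝ => (1/((q:ℂ)+1)) * ((∑ j ∈ F, c t j * EE j x) ^ (q+1) * EE k x) from
      funext fun x => by ring]
    rw [intervalIntegral.integral_const_mul, pow_pair]
  -- second integral
  have h2 : (∫ x in (-π : ℝ)..π,
        (-(∑ k ∈ F, (Complex.I * k) * ((l k : ℝ) : ℂ) * c t k * EE k x)
            + deriv (fun y : ℂ => (∑ k ∈ F, c t k
                * Complex.exp (Complex.I * k * y)) ^ (q+1) / ((q:ℂ)+1)) (x : ℂ))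
          * starRingEnd ℂ (∑ k ∈ F, d k * EE k x))
      = 2*π * ∑ k ∈ F, (-(Complex.I * k * ((l k : ℝ) : ℂ) * c t k)) * (starRingEnd ℂ) (d k)
        + ∑ k ∈ F, (starRingEnd ℂ) (d k)
            * (Complex.I * k * ((1/((q:ℂ)+1)) * (2 * π * G (-k)))) := by
    rw [show (fun x => (-(∑ k ∈ F, (Complex.I * k) * ((l k : ℝ) : ℂ) * c t k * EE k x)
            + deriv (fun y : ℂ => (∑ k ∈ F, c t k
                * Complex.exp (Complex.I * k * y)) ^ (q+1) / ((q:ℂ)+1)) (x : ℂ))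
          * starRingEnd ℂ (∑ k ∈ F, d k * EE k x))
        = fun x => (∑ k ∈ F, (-(Complex.I * k * ((l k : ℝ) : ℂ) * c t k)) * EE k x)
              * (∑ k ∈ F, (starRingEnd ℂ) (d (-k)) * EE k x)
            + ((∑ k ∈ F, c t k * EE k x) ^ q
                * (∑ k ∈ F, c t k * (Complex.I * k * EE k x)))
              * (∑ k ∈ F, (starRingEnd ℂ) (d (-k)) * EE k x) from by
      funext x
      rw [hDeq x, hF, conj_trig, ← hF, add_mul]
      congr 2
      rw [← Finset.sum_neg_distrib]
      exact Finset.sum_congr rfl fun k _ => by ring]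
    rw [intervalIntegral.integral_add
      (f := fun x => (∑ k ∈ F, (-(Complex.I * k * ((l k : ℝ) : ℂ) * c t k)) * EE k x)
                * (∑ k ∈ F, (starRingEnd ℂ) (d (-k)) * EE k x))
      (g := fun x => ((∑ k ∈ F, c t k * EE k x) ^ q
                  * (∑ k ∈ F, c t k * (Complex.I * k * EE k x)))
                * (∑ k ∈ F, (starRingEnd ℂ) (d (-k)) * EE k x))
      ((hSc.mul hXc).intervalIntegrable _ _) ((hDhc.mul hXc).intervalIntegrable _ _)]
    congr 1
    · rw [hF, pairing, collapse]
      simp only [neg_neg]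
    · rw [hF, half_pairing _ hDhc]
      rw [← sum_neg_Icc N (fun k => (starRingEnd ℂ) (d k)
          * (Complex.I * k * ((1/((q:ℂ)+1)) * (2 * π * G (-k)))))]
      refine Finset.sum_congr rfl fun k _ => ?_
      rw [hkey k]
      push_cast
      ring_nf
  -- combine the pieces using the weak formulation
  rw [h1, h2] at hw
  have h2pi : (2 * (π:ℂ)) ≠ 0 := by
    simp [Complex.ofReal_ne_zero, Real.pi_ne_zero]
  have hXzero : ∑ k ∈ F, (starRingEnd ℂ) (d k) * A k = 0 := by
    have hcomb : (2*(π:ℂ)) * ∑ k ∈ F, (starRingEnd ℂ) (d k) * A k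
        = 2*π * ∑ k ∈ F, cp k * (starRingEnd ℂ) (d k)
          + (2*π * ∑ k ∈ F, (-(Complex.I * k * ((l k : ℝ):ℂ) * c t k)) * (starRingEnd ℂ) (d k)
            + ∑ k ∈ F, (starRingEnd ℂ) (d k)
                * (Complex.I * k * ((1/((q:ℂ)+1)) * (2 * π * G (-k))))) := by
      rw [Finset.mul_sum, Finset.mul_sum, Finset.mul_sum, ← Finset.sum_add_distrib,
        ← Finset.sum_add_distrib]
      refine Finset.sum_congr rfl fun k _ => ?_
      rw [hA]
      ring
    rw [hw] at hcomb
    exact (mul_eq_zero.mp hcomb).resolve_left h2pi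
  have hconj : ∑ k ∈ F, (starRingEnd ℂ) (A k) * A k = 0 := by
    rw [← hXzero]
    refine Finset.sum_congr rfl fun k hk => ?_
    rw [hd]
    simp only [if_pos hk]
  have hAzero := conj_sum_zero hconj
  intro k hk
  have hz := hAzero k hk
  rw [hA] at hz
  simp only [hl, hG] at hz ⊢
  rw [hF] at hz
  linear_combination hz

set_option maxHeartbeats 1600000 in
/-- L² conservation for the semidiscrete Fourier–Galerkin scheme for the
Benjamin-type equation `u_t - L u_x + f(u)_x = 0`, `f(u) = u^{q+1}/(q+1)`,
with symbol `l(k) = δ|k|^{2m} - γ|k|^{2r}`.  The approximation `u^N` is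
represented by its Fourier coefficients `c t k`, `|k| ≤ N`. -/
theorem benjamin_semidiscrete_energy_conservation
    (N q m : ℕ) (hN : 1 ≤ N) (hq : 1 ≤ q) (hm : 1 ≤ m)
    (r δ γ : ℝ) (hδ : 0 < δ) (hγ : 0 ≤ γ) (hr0 : 0 ≤ r) (hrm : r < m)
    (c : ℝ → ℤ → ℂ)
    (hdiff : ∀ k, Differentiable ℝ (fun t => c t k))
    (hsupp : ∀ t, ∀ k : ℤ, (N : ℤ) < |k| → c t k = 0)
    (hsym : ∀ t, ∀ k : ℤ, c t (-k) = starRingEnd ℂ (c t k))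
    (hweak : ∀ d : ℤ → ℂ, (∀ k : ℤ, (N : ℤ) < |k| → d k = 0) → ∀ t > (0 : ℝ),
      (∫ x in (-π : ℝ)..π,
          (deriv (fun s => ∑ k ∈ Finset.Icc (-(N : ℤ)) N,
              c s k * Complex.exp (Complex.I * k * x)) t)
            * starRingEnd ℂ (∑ k ∈ Finset.Icc (-(N : ℤ)) N,
                d k * Complex.exp (Complex.I * k * x)))
        + (∫ x in (-π : ℝ)..π,
            (-(∑ k ∈ Finset.Icc (-(N : ℤ)) N,
                (Complex.I * k)
                  * ((δ * |(k : ℝ)| ^ (2 * m) - γ * |(k : ℝ)| ^ (2 * r) : ℝ) : ℂ)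
                  * c t k * Complex.exp (Complex.I * k * x))
              + deriv (fun y => (∑ k ∈ Finset.Icc (-(N : ℤ)) N,
                  c t k * Complex.exp (Complex.I * k * y)) ^ (q + 1) / (q + 1)) x)
              * starRingEnd ℂ (∑ k ∈ Finset.Icc (-(N : ℤ)) N,
                  d k * Complex.exp (Complex.I * k * x))) = 0) :
    ∀ t > (0 : ℝ),
      deriv (fun s => ∫ x in (-π : ℝ)..π,
        (∑ k ∈ Finset.Icc (-(N : ℤ)) N, c s k * Complex.exp (Complex.I * k * x))
          * (∑ k ∈ Finset.Icc (-(N : ℤ)) N,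
              ((δ * |(k : ℝ)| ^ (2 * m) - γ * |(k : ℝ)| ^ (2 * r) : ℝ) : ℂ)
                * c s k * Complex.exp (Complex.I * k * x))
          - 2 * (∑ k ∈ Finset.Icc (-(N : ℤ)) N,
              c s k * Complex.exp (Complex.I * k * x)) ^ (q + 2) / ((q + 1) * (q + 2))) t
        = 0 := by
  intro t ht
  have hkey := stepA N q m r δ γ c t ht hdiff hweak
  set F := Finset.Icc (-(N:ℤ)) N with hF
  set l : ℤ → ℝ := fun k => δ * |(k:ℝ)| ^ (2*m) - γ * |(k:ℝ)| ^ (2*r) with hl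
  set cp : ℤ → ℂ := fun k => deriv (fun s => c s k) t with hcp
  set G : ℤ → ℂ := fun k => ∑ p ∈ Fintype.piFinset (fun _ : Fin (q+1) => F),
      (if k + ∑ i, p i = 0 then ∏ i, c t (p i) else 0) with hG
  have hq1 : ((q:ℂ)+1) ≠ 0 := by
    have : ((q:ℕ)+1 : ℕ) ≠ 0 := Nat.succ_ne_zero q
    exact_mod_cast this
  have hq2 : ((q:ℂ)+2) ≠ 0 := by
    have : ((q:ℕ)+2 : ℕ) ≠ 0 := Nat.succ_ne_zero (q+1)
    exact_mod_cast this
  have hleven : ∀ k : ℤ, l (-k) = l k := by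
    intro k
    simp only [hl]
    push_cast
    rw [abs_neg]
  -- the energy functional as an explicit function of the coefficients
  have hfun : (fun s => ∫ x in (-π : ℝ)..π,
        (∑ k ∈ F, c s k * EE k x)
          * (∑ k ∈ F, ((δ * |(k : ℝ)| ^ (2 * m) - γ * |(k : ℝ)| ^ (2 * r) : ℝ) : ℂ)
              * c s k * EE k x)
          - 2 * (∑ k ∈ F, c s k * EE k x) ^ (q + 2) / (((q:ℂ) + 1) * ((q:ℂ) + 2)))
      = fun s => 2*π * ∑ j ∈ F, c s j * (((l (-j) : ℝ) : ℂ) * c s (-j))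
          - (2/(((q:ℂ)+1)*((q:ℂ)+2)))
            * (2*π * ∑ p ∈ Fintype.piFinset (fun _ : Fin (q+2) => F),
                (if ∑ i, p i = 0 then ∏ i, c s (p i) else 0)) := by
    funext s
    have hUc : Continuous (fun x : ℝ => ∑ k ∈ F, c s k * EE k x) :=
      continuous_finset_sum _ fun k _ => continuous_const.mul (EE_cont k)
    have hLc : Continuous (fun x : ℝ => ∑ k ∈ F, ((l k : ℝ) : ℂ) * c s k * EE k x) :=
      continuous_finset_sum _ fun k _ => continuous_const.mul (EE_cont k)
    rw [intervalIntegral.integral_sub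
      (f := fun x => (∑ k ∈ F, c s k * EE k x) * (∑ k ∈ F, ((l k : ℝ) : ℂ) * c s k * EE k x))
      (g := fun x => 2 * (∑ k ∈ F, c s k * EE k x) ^ (q + 2) / (((q:ℂ) + 1) * ((q:ℂ) + 2)))
      ((hUc.mul hLc).intervalIntegrable _ _)
      (((continuous_const.mul (hUc.pow (q+2))).div_const _).intervalIntegrable _ _)]
    congr 1
    · rw [hF, pairing, collapse]
    · rw [show (fun x => 2 * (∑ k ∈ F, c s k * EE k x) ^ (q + 2)
            / (((q:ℂ) + 1) * ((q:ℂ) + 2)))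
          = fun x => (2/(((q:ℂ)+1)*((q:ℂ)+2))) * (∑ k ∈ F, c s k * EE k x) ^ (q + 2) from by
        funext x; ring]
      rw [intervalIntegral.integral_const_mul, pow_integral]
  -- derivative of the explicit energy
  have hprod : ∀ p ∈ Fintype.piFinset (fun _ : Fin (q+2) => F), HasDerivAt
      (fun s => if ∑ i, p i = 0 then ∏ i, c s (p i) else 0)
      (if ∑ i, p i = 0 then
        ∑ j, (∏ i ∈ Finset.univ.erase j, c t (p i)) * cp (p j) else 0) t := by
    intro p _
    split_ifs with hcond
    · have := HasDerivAt.fun_finsetProd (𝕜 := ℝ) (x := t) (u := (Finset.univ : Finset (Fin (q+2))))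
        (f := fun i s => c s (p i)) (f' := fun j => cp (p j))
        (fun i _ => ((hdiff (p i)) t).hasDerivAt)
      simpa [smul_eq_mul, mul_comm] using this
    · exact hasDerivAt_const t 0
  have hW : HasDerivAt (fun s => ∑ p ∈ Fintype.piFinset (fun _ : Fin (q+2) => F),
        (if ∑ i, p i = 0 then ∏ i, c s (p i) else 0))
      (∑ p ∈ Fintype.piFinset (fun _ : Fin (q+2) => F),
        (if ∑ i, p i = 0 then
          ∑ j, (∏ i ∈ Finset.univ.erase j, c t (p i)) * cp (p j) else 0)) t :=
    HasDerivAt.fun_sum hprod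
  have hQ : HasDerivAt (fun s => ∑ j ∈ F, c s j * (((l (-j) : ℝ) : ℂ) * c s (-j)))
      (∑ j ∈ F, (cp j * (((l (-j) : ℝ) : ℂ) * c t (-j))
        + c t j * (((l (-j) : ℝ) : ℂ) * cp (-j)))) t :=
    HasDerivAt.fun_sum fun j _ => ((hdiff j) t).hasDerivAt.mul
      (((hdiff (-j)) t).hasDerivAt.const_mul (((l (-j) : ℝ) : ℂ)))
  have hPhi : HasDerivAt (fun s => 2*π * ∑ j ∈ F, c s j * (((l (-j) : ℝ) : ℂ) * c s (-j))
          - (2/(((q:ℂ)+1)*((q:ℂ)+2)))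
            * (2*π * ∑ p ∈ Fintype.piFinset (fun _ : Fin (q+2) => F),
                (if ∑ i, p i = 0 then ∏ i, c s (p i) else 0)))
      (2*π * (∑ j ∈ F, (cp j * (((l (-j) : ℝ) : ℂ) * c t (-j))
          + c t j * (((l (-j) : ℝ) : ℂ) * cp (-j))))
        - (2/(((q:ℂ)+1)*((q:ℂ)+2)))
          * (2*π * ∑ p ∈ Fintype.piFinset (fun _ : Fin (q+2) => F),
              (if ∑ i, p i = 0 then
                ∑ j, (∏ i ∈ Finset.univ.erase j, c t (p i)) * cp (p j) else 0))) t :=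
    (hQ.const_mul (2*(π:ℂ))).sub ((hW.const_mul (2*(π:ℂ))).const_mul _)
  rw [hfun, hPhi.deriv]
  -- symmetrization
  have hsymm : ∑ p ∈ Fintype.piFinset (fun _ : Fin (q+2) => F),
        (if ∑ i, p i = 0 then
          ∑ j, (∏ i ∈ Finset.univ.erase j, c t (p i)) * cp (p j) else 0)
      = ((q:ℂ)+2) * ∑ k ∈ F, cp k * G k := by
    simp only [hG]
    rw [symmetrize (q+1) F (c t) cp]
    push_cast
    ring
  rw [hsymm]
  -- coefficient ODE from Step A
  have hA2 : ∀ k ∈ F, cp k = Complex.I * k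
      * (((l k : ℝ) : ℂ) * c t k - G (-k) / ((q:ℂ)+1)) := by
    intro k hk
    simp only [hl, hG, hcp]
    exact hkey k hk
  -- odd symmetry kills the sum
  have hodd := odd_sum_zero N (fun k => Complex.I * k
      * (((l k : ℝ) : ℂ) * c t k - G (-k) / ((q:ℂ)+1))
      * (((l (-k) : ℝ) : ℂ) * c t (-k) - G k / ((q:ℂ)+1)))
    (fun k => by simp only [neg_neg]; push_cast; ring)
  have hS : ∑ k ∈ F, cp k * (((l k : ℝ) : ℂ) * c t (-k) - G k / ((q:ℂ)+1)) = 0 :=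
    (Finset.sum_congr rfl fun k hk => by simp only [hA2 k hk, hleven]).trans hodd
  have hS1 : ∑ k ∈ F, cp k * (((l k : ℝ) : ℂ) * c t (-k))
      = (1/((q:ℂ)+1)) * ∑ k ∈ F, cp k * G k := by
    have hexp : ∑ k ∈ F, cp k * (((l k : ℝ) : ℂ) * c t (-k) - G k / ((q:ℂ)+1))
        = ∑ k ∈ F, cp k * (((l k : ℝ) : ℂ) * c t (-k))
          - ∑ k ∈ F, (1/((q:ℂ)+1)) * (cp k * G k) := by
      rw [← Finset.sum_sub_distrib]
      exact Finset.sum_congr rfl fun k _ => by ring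
    have h := hexp.symm.trans hS
    rw [Finset.mul_sum]
    linear_combination h
  have hS2 : ∑ j ∈ F, c t j * (((l j : ℝ) : ℂ) * cp (-j))
      = ∑ j ∈ F, cp j * (((l j : ℝ) : ℂ) * c t (-j)) := by
    have h := sum_neg_Icc N (fun k => cp k * (((l k : ℝ) : ℂ) * c t (-k)))
    rw [← hF] at h
    rw [← h]
    refine Finset.sum_congr rfl fun k _ => ?_
    simp only [neg_neg, hleven]
    ring
  rw [Finset.sum_add_distrib]
  simp only [hleven]
  rw [hS2, hS1]
  field_simp
  ring
end
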